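/- Sufficient condition for exponentially bounded flow: if Δ(t) = −(1/c)G(t) + (1/c)Ḡ where G(t) is diagonal with entries ≥ g_L > 0 and Ḡ is symmetric with largest eigenvalue σ₁ satisfying σ₁ < g_L, then the flow Γ(s,t) of V' = Δ(t)V satisfies ‖Γ(s,t)‖ ≤ M e^{−m(t−s)} for some m > 0 (namely m = (g_L − σ₁)/c) and all s ≤ t. -/

import Mathlib

open MeasureTheory

/-- sufficient condition for exponentially bounded flow: if
`Δ(t) = −(1/c)G(t) + (1/c)Ḡ` where `G(t)` is diagonal with entries `≥ g_L > 0`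
and `Ḡ` is symmetric with operator norm (largest eigenvalue) `σ₁ < g_L`, then
the flow `Γ(s,t)` of `V' = Δ(t)V` satisfies `‖Γ(s,t)‖ ≤ M e^{−m(t−s)}` with
`m = (g_L − σ₁)/c > 0`, for all `s ≤ t`. -/
theorem stmt6 (N : ℕ) (c gL σ1 : ℝ) (hc : 0 < c) (hgL : 0 < gL)
    (g : Fin N → ℝ → ℝ) (hgc : ∀ k, Continuous (g k)) (hg : ∀ k t, gL ≤ g k t)
    (G : ℝ → (EuclideanSpace ℝ (Fin N) →L[ℝ] EuclideanSpace ℝ (Fin N)))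
    (hGdiag : ∀ t, ∀ v : EuclideanSpace ℝ (Fin N), ∀ k : Fin N,
      (G t v) k = g k t * v k)
    (Gbar : EuclideanSpace ℝ (Fin N) →L[ℝ] EuclideanSpace ℝ (Fin N))
    (hGbarSym : IsSelfAdjoint Gbar) (hσ1 : ‖Gbar‖ = σ1) (hlt : σ1 < gL)
    (Γ : ℝ → ℝ → (EuclideanSpace ℝ (Fin N) →L[ℝ] EuclideanSpace ℝ (Fin N)))
    (hΓ0 : ∀ s, Γ s s = 1)
    (hΓ : ∀ s t : ℝ,
      HasDerivAt (fun u => Γ s u) (((1 / c) • (Gbar - G t)) * Γ s t) t) :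
    ∃ M : ℝ, 0 < M ∧ 0 < (gL - σ1) / c ∧
      ∀ s t : ℝ, s ≤ t →
        ‖Γ s t‖ ≤ M * Real.exp (-((gL - σ1) / c) * (t - s)) := by
  set m := (gL - σ1) / c with hmdef
  have hm0 : 0 < m := div_pos (by linarith) hc
  refine ⟨1, one_pos, hm0, ?_⟩
  intro s t hst
  rw [one_mul]
  refine ContinuousLinearMap.opNorm_le_bound _ (Real.exp_pos _).le ?_
  intro v
  set u : ℝ → EuclideanSpace ℝ (Fin N) := fun r => Γ s r v with hu
  have hud : ∀ r, HasDerivAt u (((1 / c) • (Gbar - G r)) (u r)) r := by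
    intro r
    have h1 := (hΓ s r).clm_apply (hasDerivAt_const r v)
    simpa using h1
  -- key dissipativity inequality
  have key : ∀ (r : ℝ) (w : EuclideanSpace ℝ (Fin N)),
      (inner ℝ (((1 / c) • (Gbar - G r)) w) w : ℝ) ≤ -m * inner ℝ w w := by
    intro r w
    have hGw : (inner ℝ (Gbar w) w : ℝ) ≤ σ1 * inner ℝ w w := by
      calc (inner ℝ (Gbar w) w : ℝ) ≤ ‖Gbar w‖ * ‖w‖ := real_inner_le_norm _ _
        _ ≤ ‖Gbar‖ * ‖w‖ * ‖w‖ :=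
          mul_le_mul_of_nonneg_right (Gbar.le_opNorm w) (norm_nonneg _)
        _ = σ1 * inner ℝ w w := by
          rw [hσ1, real_inner_self_eq_norm_mul_norm]; ring
    have hGrw : gL * inner ℝ w w ≤ (inner ℝ ((G r) w) w : ℝ) := by
      have h1 : (inner ℝ ((G r) w) w : ℝ) = ∑ k, g k r * w k * w k := by
        simp [PiLp.inner_apply, hGdiag, RCLike.inner_apply, mul_assoc]
        exact Finset.sum_congr rfl fun k _ => by ring
      have h2 : (inner ℝ w w : ℝ) = ∑ k, w k * w k := by
        simp only [PiLp.inner_apply, RCLike.inner_apply, conj_trivial]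
      rw [h1, h2, Finset.mul_sum]
      refine Finset.sum_le_sum fun k _ => ?_
      nlinarith [mul_self_nonneg (w k), hg k r]
    have hsplit : (inner ℝ (((1 / c) • (Gbar - G r)) w) w : ℝ)
        = (1 / c) * ((inner ℝ (Gbar w) w : ℝ) - inner ℝ ((G r) w) w) := by
      rw [ContinuousLinearMap.smul_apply, real_inner_smul_left,
        ContinuousLinearMap.sub_apply, inner_sub_left]
    rw [hsplit]
    have hnn : (0 : ℝ) ≤ inner ℝ w w := real_inner_self_nonneg
    have : (inner ℝ (Gbar w) w : ℝ) - inner ℝ ((G r) w) w ≤ (σ1 - gL) * inner ℝ w w := by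
      nlinarith
    calc (1 / c) * ((inner ℝ (Gbar w) w : ℝ) - inner ℝ ((G r) w) w)
        ≤ (1 / c) * ((σ1 - gL) * inner ℝ w w) :=
          mul_le_mul_of_nonneg_left this (by positivity)
      _ = -m * inner ℝ w w := by rw [hmdef]; field_simp; ring
  -- the Lyapunov function
  set h : ℝ → ℝ := fun r => Real.exp (2 * m * r) * inner ℝ (u r) (u r) with hh
  have hhd : ∀ r, HasDerivAt h
      (2 * m * Real.exp (2 * m * r) * inner ℝ (u r) (u r)
        + Real.exp (2 * m * r) *
          ((inner ℝ (u r) (((1 / c) • (Gbar - G r)) (u r)) : ℝ)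
            + inner ℝ (((1 / c) • (Gbar - G r)) (u r)) (u r))) r := by
    intro r
    have he : HasDerivAt (fun r : ℝ => Real.exp (2 * m * r))
        (2 * m * Real.exp (2 * m * r)) r := by
      simpa [mul_comm] using ((hasDerivAt_id r).const_mul (2 * m)).exp
    exact he.mul (HasDerivAt.inner ℝ (hud r) (hud r))
  have hderiv_nonpos : ∀ r, deriv h r ≤ 0 := by
    intro r
    rw [(hhd r).deriv]
    have h1 := key r (u r)
    have h2 : (inner ℝ (u r) (((1 / c) • (Gbar - G r)) (u r)) : ℝ)
        = inner ℝ (((1 / c) • (Gbar - G r)) (u r)) (u r) := real_inner_comm _ _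
    have hnn : (0 : ℝ) ≤ inner ℝ (u r) (u r) := real_inner_self_nonneg
    have hexp : (0 : ℝ) < Real.exp (2 * m * r) := Real.exp_pos _
    rw [h2]
    nlinarith
  have hanti : Antitone h :=
    antitone_of_deriv_nonpos (fun r => (hhd r).differentiableAt) hderiv_nonpos
  have hst' := hanti hst
  have hus : u s = v := by simp [hu, hΓ0 s]
  have hvnorm : (inner ℝ (u t) (u t) : ℝ) = ‖u t‖ ^ 2 := real_inner_self_eq_norm_sq _
  have hvv : (inner ℝ v v : ℝ) = ‖v‖ ^ 2 := real_inner_self_eq_norm_sq _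
  have hsq : ‖u t‖ ^ 2 ≤ (Real.exp (-m * (t - s)) * ‖v‖) ^ 2 := by
    have h3 : Real.exp (2 * m * t) * ‖u t‖ ^ 2 ≤ Real.exp (2 * m * s) * ‖v‖ ^ 2 := by
      have := hst'
      rw [hh] at this
      simp only at this
      rw [hus, hvnorm, hvv] at this
      exact this
    have h4 : (Real.exp (-m * (t - s)) * ‖v‖) ^ 2
        = Real.exp (2 * m * s) / Real.exp (2 * m * t) * ‖v‖ ^ 2 := by
      rw [mul_pow, ← Real.exp_nat_mul]
      rw [← Real.exp_sub]
      ring_nf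
    rw [h4]
    rw [div_mul_eq_mul_div, le_div_iff₀ (Real.exp_pos _)]
    nlinarith [Real.exp_pos (2 * m * t)]
  have hb : (0:ℝ) ≤ Real.exp (-m * (t - s)) * ‖v‖ := by positivity
  exact (pow_le_pow_iff_left₀ (norm_nonneg _) hb two_ne_zero).mp hsq
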